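/- arXiv:1202.6112 — 4 statements merged into one kernel-verified Lean document; each statement's English description precedes it below -/
import Mathlib

section
/- Let λ > 1 and let μ ∈ (0,1) be its conjugate, i.e. μ·e^{−μ} = λ·e^{−λ}. Then x = λ − μ is the unique positive real solution of the equation 1 − e^{−x} − x·e^{−x} = (1 − μ)·(1 − μ/λ). -/
lemma f_strictMonoOn : StrictMonoOn (fun x : ℝ => 1 - Real.exp (-x) - x * Real.exp (-x)) (Set.Ici 0) := by
  have h : ∀ x : ℝ, HasDerivAt (fun x : ℝ => 1 - Real.exp (-x) - x * Real.exp (-x))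
      (x * Real.exp (-x)) x := by
    intro x
    have he : HasDerivAt (fun x : ℝ => Real.exp (-x)) (-Real.exp (-x)) x := by
      have h0 := (Real.hasDerivAt_exp (-x)).comp x (hasDerivAt_neg x)
      simp only [mul_neg, mul_one] at h0
      exact h0
    have h2 : HasDerivAt (fun x : ℝ => x * Real.exp (-x))
        (1 * Real.exp (-x) + x * (-Real.exp (-x))) x := (hasDerivAt_id x).mul he
    have := ((hasDerivAt_const x (1:ℝ)).sub he).sub h2
    convert this using 1
    · rfl
    · rfl
    · rfl
    ring
  apply strictMonoOn_of_deriv_pos (convex_Ici 0)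
  · exact (Continuous.continuousOn (by continuity))
  · intro x hx
    rw [interior_Ici] at hx
    rw [(h x).deriv]
    exact mul_pos hx (Real.exp_pos _)

/-- Let `λ > 1` and let `μ ∈ (0,1)` be its conjugate, i.e. `μ·e^{−μ} = λ·e^{−λ}`.
Then `x = λ − μ` is the unique positive real solution of
`1 − e^{−x} − x·e^{−x} = (1 − μ)·(1 − μ/λ)`. -/
theorem two_core_density_equation (lam mu : ℝ) (hlam : 1 < lam)
    (hmu : mu ∈ Set.Ioo (0 : ℝ) 1)
    (hconj : mu * Real.exp (-mu) = lam * Real.exp (-lam)) :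
    (1 - Real.exp (-(lam - mu)) - (lam - mu) * Real.exp (-(lam - mu))
        = (1 - mu) * (1 - mu / lam)) ∧
      ∀ x : ℝ, 0 < x →
        1 - Real.exp (-x) - x * Real.exp (-x) = (1 - mu) * (1 - mu / lam) →
          x = lam - mu := by
  obtain ⟨hmu0, hmu1⟩ := hmu
  have hlam0 : (0:ℝ) < lam := lt_trans one_pos hlam
  have hd : 0 < lam - mu := by linarith
  have hexp : Real.exp (-(lam - mu)) = mu / lam := by
    have : Real.exp (-(lam - mu)) = Real.exp (-lam) / Real.exp (-mu) := by
      rw [← Real.exp_sub]; ring_nf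
    rw [this, div_eq_div_iff (Real.exp_pos _).ne' hlam0.ne']
    linarith [hconj]
  have hmain : 1 - Real.exp (-(lam - mu)) - (lam - mu) * Real.exp (-(lam - mu))
      = (1 - mu) * (1 - mu / lam) := by
    rw [hexp]; field_simp
  refine ⟨hmain, fun x hx hfx => ?_⟩
  have := f_strictMonoOn.injOn (le_of_lt hx : x ∈ Set.Ici 0) (le_of_lt hd : lam - mu ∈ Set.Ici 0)
  exact this (by simp only [hfx, hmain])
end

section
/- Fix Λ₀ > 0 and M > 0. There exist constants c₁, c₂ > 0 and N ∈ ℕ such that for all n ≥ N, all natural numbers m, r with |m − n·(1 − e^{−Λ₀}(1 + Λ₀ + Λ₀²/2))| ≤ M√n and |r − n·Λ₀·(1 − e^{−Λ₀}(1 + Λ₀))| ≤ M√n, and all reals x > 0 with |x − Λ₀| ≤ M/√n, one has c₁ ≤ e^{−n(x−Λ₀)} · ((1 + x + x²/2)/(1 + Λ₀ + Λ₀²/2))^{n−m} · (x/Λ₀)^{r} ≤ c₂ (in particular m ≤ n for such n). -/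
set_option maxHeartbeats 1000000

lemma log_one_add_taylor' {u : ℝ} (h : |u| ≤ 1/2) : |Real.log (1+u) - u| ≤ 2*u^2 := by
  obtain ⟨h1, h2⟩ := abs_le.1 h
  have hpos : (0:ℝ) < 1 + u := by linarith
  have hup : Real.log (1+u) ≤ u := by
    have := Real.log_le_sub_one_of_pos hpos; linarith
  have hinv : (0:ℝ) < (1+u)⁻¹ := by positivity
  have hlo : 1 - (1+u)⁻¹ ≤ Real.log (1+u) := by
    have h3 := Real.log_le_sub_one_of_pos hinv
    rw [Real.log_inv] at h3; linarith
  have h4 : u^2 * (1+u)⁻¹ ≤ 2*u^2 := by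
    rw [mul_inv_le_iff₀ hpos]; nlinarith [sq_nonneg u]
  have key : 1 - (1+u)⁻¹ - u = -(u^2 * (1+u)⁻¹) := by field_simp; ring
  rw [abs_le]
  constructor
  · nlinarith [sq_nonneg u]
  · nlinarith [sq_nonneg u]

/-- The analytic core of Lemma 3.3: the likelihood ratio
`e^{−n(x−Λ₀)}·((1+x+x²/2)/(1+Λ₀+Λ₀²/2))^{n−m}·(x/Λ₀)^r` is bounded between two positive
constants in the stated windows for `m`, `r` and `x`. -/
theorem likelihood_ratio_bounded (Λ₀ M : ℝ) (hΛ : 0 < Λ₀) (hM : 0 < M) :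
    ∃ c₁ c₂ : ℝ, 0 < c₁ ∧ 0 < c₂ ∧ ∃ N : ℕ, ∀ n : ℕ, N ≤ n → ∀ m r : ℕ,
      |(m : ℝ) - n * (1 - Real.exp (-Λ₀) * (1 + Λ₀ + Λ₀ ^ 2 / 2))| ≤ M * Real.sqrt n →
      |(r : ℝ) - n * Λ₀ * (1 - Real.exp (-Λ₀) * (1 + Λ₀))| ≤ M * Real.sqrt n →
      ∀ x : ℝ, 0 < x → |x - Λ₀| ≤ M / Real.sqrt n →
        m ≤ n ∧
        c₁ ≤ Real.exp (-(n * (x - Λ₀)))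
              * ((1 + x + x ^ 2 / 2) / (1 + Λ₀ + Λ₀ ^ 2 / 2)) ^ (n - m)
              * (x / Λ₀) ^ r ∧
        Real.exp (-(n * (x - Λ₀)))
              * ((1 + x + x ^ 2 / 2) / (1 + Λ₀ + Λ₀ ^ 2 / 2)) ^ (n - m)
              * (x / Λ₀) ^ r ≤ c₂ := by
  have hΛne : Λ₀ ≠ 0 := ne_of_gt hΛ
  set D : ℝ := 1 + Λ₀ + Λ₀ ^ 2 / 2 with hDdef
  have hD : 0 < D := by rw [hDdef]; nlinarith [sq_nonneg Λ₀]
  have hDne : D ≠ 0 := ne_of_gt hD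
  set q : ℝ := 1 - Real.exp (-Λ₀) * (1 + Λ₀) with hqdef
  have hq : 0 < q := by
    have h1 : (1+Λ₀) < Real.exp Λ₀ := by
      have := Real.add_one_lt_exp (ne_of_gt hΛ); linarith
    have h2 : Real.exp (-Λ₀) * (1+Λ₀) < Real.exp (-Λ₀) * Real.exp Λ₀ :=
      mul_lt_mul_of_pos_left h1 (Real.exp_pos _)
    rw [← Real.exp_add, neg_add_cancel, Real.exp_zero] at h2
    rw [hqdef]; linarith
  set p : ℝ := Real.exp (-Λ₀) * D with hpdef
  have hp : 0 < p := by rw [hpdef]; exact mul_pos (Real.exp_pos _) hD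
  set a : ℝ := (1+Λ₀)/D with hadef
  have ha : 0 < a := by rw [hadef]; exact div_pos (by linarith) hD
  have hid : p * a + q = 1 := by
    rw [hpdef, hadef, hqdef]; field_simp; ring
  set δ : ℝ := min (Λ₀/2) (min 1 (D/(2*(2+Λ₀)))) with hδdef
  have hδ : 0 < δ := by
    rw [hδdef]
    exact lt_min (by linarith) (lt_min one_pos (div_pos hD (by linarith)))
  set Kf : ℝ := 1/(2*D) + 2*((2+Λ₀)/D)^2 with hKfdef
  have hKf : 0 < Kf := by
    rw [hKfdef]
    have h1 : (0:ℝ) < 1/(2*D) := by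
      apply div_pos one_pos; linarith
    nlinarith [sq_nonneg ((2+Λ₀)/D)]
  set Kg : ℝ := 2/Λ₀^2 with hKgdef
  have hKg : 0 < Kg := by
    rw [hKgdef]; exact div_pos (by norm_num) (pow_pos hΛ 2)
  set C : ℝ := M^2*(a + 1/Λ₀) + Kf*(M^2*(p+M)) + Kg*(M^2*(Λ₀*q+M)) with hCdef
  have hC : 0 < C := by
    have h1 : 0 < M^2*(a + 1/Λ₀) := by
      apply mul_pos (pow_pos hM 2)
      have := div_pos one_pos hΛ; linarith
    have h2 : 0 < Kf*(M^2*(p+M)) :=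
      mul_pos hKf (mul_pos (pow_pos hM 2) (by linarith))
    have h3 : 0 < Kg*(M^2*(Λ₀*q+M)) :=
      mul_pos hKg (mul_pos (pow_pos hM 2) (by nlinarith [mul_pos hΛ hq]))
    rw [hCdef]; linarith
  clear_value D q p a δ Kf Kg C
  refine ⟨Real.exp (-C), Real.exp C, Real.exp_pos _, Real.exp_pos _,
    ⌈(M/δ)^2⌉₊ + ⌈(M/p)^2⌉₊ + 1, ?_⟩
  intro n hn m r hm hr x hx hxd
  have hn1 : 1 ≤ n := by omega
  have hnR : (1:ℝ) ≤ (n:ℝ) := by exact_mod_cast hn1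
  have hnpos : (0:ℝ) < n := by linarith
  have hsq1 : (1:ℝ) ≤ Real.sqrt n := by
    rw [show (1:ℝ) = Real.sqrt 1 by simp]
    exact Real.sqrt_le_sqrt hnR
  have hsqpos : (0:ℝ) < Real.sqrt n := by linarith
  have hceil1 : ((M/δ)^2 : ℝ) ≤ n := by
    calc ((M/δ)^2 : ℝ) ≤ (⌈(M/δ)^2⌉₊ : ℝ) := Nat.le_ceil _
    _ ≤ n := by exact_mod_cast Nat.le_of_lt_succ (by omega)
  have hceil2 : ((M/p)^2 : ℝ) ≤ n := by
    calc ((M/p)^2 : ℝ) ≤ (⌈(M/p)^2⌉₊ : ℝ) := Nat.le_ceil _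
    _ ≤ n := by exact_mod_cast Nat.le_of_lt_succ (by omega)
  clear hn
  have hsδ : M/δ ≤ Real.sqrt n := Real.le_sqrt_of_sq_le hceil1
  have hsp : M/p ≤ Real.sqrt n := Real.le_sqrt_of_sq_le hceil2
  have hMδ : M / Real.sqrt n ≤ δ := by
    rw [div_le_iff₀ hsqpos]
    have h := (div_le_iff₀ hδ).mp hsδ
    linarith only [h]
  set ε : ℝ := x - Λ₀ with hεdef
  have hεδ : |ε| ≤ δ := le_trans hxd hMδ
  have hε1 : |ε| ≤ Λ₀/2 := le_trans hεδ (by rw [hδdef]; exact min_le_left _ _)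
  have hε2 : |ε| ≤ 1 :=
    le_trans hεδ (by rw [hδdef]; exact le_trans (min_le_right _ _) (min_le_left _ _))
  have hε3 : |ε| ≤ D/(2*(2+Λ₀)) :=
    le_trans hεδ (by rw [hδdef]; exact le_trans (min_le_right _ _) (min_le_right _ _))
  have hε3' : |ε| * (2*(2+Λ₀)) ≤ D := by
    rw [le_div_iff₀ (by linarith : (0:ℝ) < 2*(2+Λ₀))] at hε3
    exact hε3
  obtain ⟨hεlo, hεhi⟩ := abs_le.1 hε1
  -- m ≤ n
  have hmn : m ≤ n := by
    have h1 : (m:ℝ) ≤ n * (1 - p) + M * Real.sqrt n := by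
      have h := (abs_le.1 hm).2; linarith only [h]
    have h3 := (div_le_iff₀ hp).mp hsp
    have h2 : M * Real.sqrt n ≤ p * n := by
      calc M * Real.sqrt n ≤ (Real.sqrt n * p) * Real.sqrt n :=
            mul_le_mul_of_nonneg_right h3 hsqpos.le
      _ = p * (Real.sqrt n * Real.sqrt n) := by ring
      _ = p * n := by rw [Real.mul_self_sqrt hnpos.le]
    have h6 : (n:ℝ) * (1 - p) = n - n*p := by ring
    have : (m:ℝ) ≤ n := by rw [h6] at h1; linarith only [h1, h2]
    exact_mod_cast this
  refine ⟨hmn, ?_⟩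
  have hnum : (0:ℝ) < 1 + x + x ^ 2 / 2 := by
    have h0 : (0:ℝ) ≤ x^2/2 := by positivity
    linarith only [h0, hx]
  have hb1 : (0:ℝ) < (1 + x + x ^ 2 / 2) / D := div_pos hnum hD
  have hb2 : (0:ℝ) < x / Λ₀ := div_pos hx hΛ
  set Lf : ℝ := Real.log ((1 + x + x ^ 2 / 2) / D) with hLfdef
  set Lg : ℝ := Real.log (x / Λ₀) with hLgdef
  have hprod : Real.exp (-((n:ℝ) * ε)) * ((1 + x + x ^ 2 / 2) / D) ^ (n - m) * (x / Λ₀) ^ r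
      = Real.exp (-((n:ℝ) * ε) + ((n - m : ℕ):ℝ) * Lf + (r:ℝ) * Lg) := by
    rw [Real.exp_add, Real.exp_add, Real.exp_nat_mul, Real.exp_nat_mul,
      hLfdef, hLgdef, Real.exp_log hb1, Real.exp_log hb2]
  clear_value Lf Lg
  rw [hprod]
  -- Taylor estimate for Lg
  have hRg : |Lg - ε/Λ₀| ≤ Kg * ε^2 := by
    have hxΛ : x/Λ₀ = 1 + ε/Λ₀ := by rw [hεdef]; field_simp; ring
    have hu : |ε/Λ₀| ≤ 1/2 := by
      rw [abs_div, abs_of_pos hΛ, div_le_iff₀ hΛ]; linarith only [hε1]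
    have h := log_one_add_taylor' hu
    rw [← hxΛ, ← hLgdef] at h
    calc |Lg - ε/Λ₀| ≤ 2*(ε/Λ₀)^2 := h
    _ = Kg * ε^2 := by rw [hKgdef]; field_simp
  -- Taylor estimate for Lf
  have hRf : |Lf - a*ε| ≤ Kf * ε^2 := by
    set u : ℝ := ((1+Λ₀)*ε + ε^2/2)/D with hudef
    have hratio : (1 + x + x ^ 2 / 2)/D = 1 + u := by
      rw [hudef, hDdef, hεdef]; field_simp; ring
    have habsnum : |(1+Λ₀)*ε + ε^2/2| ≤ (2+Λ₀)* |ε| := by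
      have h2 := abs_add_le ((1+Λ₀)*ε) (ε^2/2)
      have h3 : |(1+Λ₀)*ε| = (1+Λ₀)* |ε| := by
        rw [abs_mul, abs_of_pos (by linarith : (0:ℝ) < 1+Λ₀)]
      have h4 : |ε^2/2| = |ε|^2/2 := by
        rw [abs_of_nonneg (by positivity), sq_abs]
      have h5 : |ε|^2 ≤ |ε| := by
        rw [sq]; exact mul_le_of_le_one_left (abs_nonneg ε) hε2
      linarith only [h2, h3, h4, h5, abs_nonneg ε]
    have huabs : |u| ≤ (2+Λ₀)* |ε| / D := by
      rw [hudef, abs_div, abs_of_pos hD]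
      exact (div_le_div_iff_of_pos_right hD).mpr habsnum
    have hu12 : |u| ≤ 1/2 := by
      have h5 : (2+Λ₀)* |ε| / D ≤ 1/2 := by
        rw [div_le_iff₀ hD]; linarith only [hε3', abs_nonneg ε]
      linarith only [h5, huabs]
    have hlog := log_one_add_taylor' hu12
    rw [← hratio, ← hLfdef] at hlog
    have hua : u - a*ε = ε^2/(2*D) := by
      rw [hudef, hadef]; field_simp; ring
    have husq : u^2 ≤ ((2+Λ₀)/D)^2 * ε^2 := by
      have h6 := mul_self_le_mul_self (abs_nonneg u) huabs
      have h7 : |u| * |u| = u^2 := by rw [← sq_abs u]; ring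
      have h8 : ((2+Λ₀)* |ε| / D)*((2+Λ₀)* |ε| / D) = ((2+Λ₀)/D)^2 * |ε|^2 := by ring
      rw [sq_abs] at h8
      linarith only [h6, h7, h8]
    calc |Lf - a*ε| = |(Lf - u) + (u - a*ε)| := by ring_nf
    _ ≤ |Lf - u| + |u - a*ε| := abs_add_le _ _
    _ ≤ 2*u^2 + ε^2/(2*D) := by
        have h9 : |u - a*ε| = ε^2/(2*D) := by
          rw [hua]; exact abs_of_nonneg (by positivity)
        linarith only [hlog, h9]
    _ ≤ Kf * ε^2 := by
        rw [hKfdef]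
        have h10 : (1/(2*D) + 2*((2+Λ₀)/D)^2) * ε^2
            = ε^2/(2*D) + 2*(((2+Λ₀)/D)^2 * ε^2) := by ring
        rw [h10]
        have h11 : u^2 ≤ ((2+Λ₀)/D)^2 * ε^2 := husq
        linarith only [h11]
  -- quantitative smallness
  have hεsq : ε^2 ≤ M^2 / n := by
    have h1 : ε^2 ≤ (M/Real.sqrt n)^2 := by
      rw [← sq_abs]; exact pow_le_pow_left₀ (abs_nonneg ε) hxd 2
    have h2 : (M/Real.sqrt n)^2 = M^2/n := by
      rw [div_pow, Real.sq_sqrt (le_of_lt hnpos)]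
    rw [h2] at h1; exact h1
  have hA : (n:ℝ) * ε^2 ≤ M^2 := by
    have h := (le_div_iff₀ hnpos).mp hεsq; linarith only [h]
  have hB : Real.sqrt n * ε^2 ≤ M^2 := by
    have h1 : Real.sqrt n ≤ (n:ℝ) :=
      (Real.sqrt_le_left (le_of_lt hnpos)).mpr
        (by rw [sq]; exact le_mul_of_one_le_left hnpos.le hnR)
    have h2 := mul_nonneg (sub_nonneg.mpr h1) (sq_nonneg ε)
    have h3 : ((n:ℝ) - Real.sqrt n) * ε^2 = (n:ℝ)*ε^2 - Real.sqrt n * ε^2 := by ring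
    rw [h3] at h2
    linarith only [h2, hA]
  have hεM : |ε| * Real.sqrt n ≤ M := (le_div_iff₀ hsqpos).mp hxd
  -- decomposition of the exponent
  have hcast : ((n - m : ℕ):ℝ) = (n:ℝ) - m := by
    rw [Nat.cast_sub hmn]
  have hnm0 : (0:ℝ) ≤ (n:ℝ) - m := by
    have h : (m:ℝ) ≤ n := by exact_mod_cast hmn
    linarith only [h]
  have hs : |(n:ℝ) - m - n*p| ≤ M * Real.sqrt n := by
    have h1 : (n:ℝ) - m - n*p = -((m:ℝ) - n*(1-p)) := by ring
    rw [h1, abs_neg]; exact hm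
  have ht : |(r:ℝ) - n*(Λ₀*q)| ≤ M * Real.sqrt n := by
    have h1 : (r:ℝ) - n*(Λ₀*q) = (r:ℝ) - n*Λ₀*q := by ring
    rw [h1]; exact hr
  have hdecomp : -((n:ℝ)*ε) + ((n - m : ℕ):ℝ)*Lf + (r:ℝ)*Lg
      = ((((n:ℝ)-m) - n*p)*(a*ε) + ((r:ℝ) - n*(Λ₀*q))*(ε/Λ₀))
        + ((((n:ℝ)-m))*(Lf - a*ε) + (r:ℝ)*(Lg - ε/Λ₀)) := by
    rw [hcast]
    linear_combination ((n:ℝ)*ε)*hid + ((n:ℝ)*q*ε)*(mul_inv_cancel₀ hΛne)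
  -- bound the main linear term
  have hmainterm : |(((n:ℝ)-m) - n*p)*(a*ε) + ((r:ℝ) - n*(Λ₀*q))*(ε/Λ₀)| ≤ M^2*(a + 1/Λ₀) := by
    have hMs : (0:ℝ) ≤ M * Real.sqrt n := mul_nonneg hM.le (Real.sqrt_nonneg _)
    have h1 : |(((n:ℝ)-m) - n*p)*(a*ε)| ≤ (M*Real.sqrt n)*(a* |ε|) := by
      rw [abs_mul, abs_mul, abs_of_pos ha]
      exact mul_le_mul hs (le_refl _) (mul_nonneg ha.le (abs_nonneg _)) hMs
    have h2 : |((r:ℝ) - n*(Λ₀*q))*(ε/Λ₀)| ≤ (M*Real.sqrt n)*(|ε|/Λ₀) := by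
      rw [abs_mul, abs_div, abs_of_pos hΛ]
      exact mul_le_mul ht (le_refl _) (div_nonneg (abs_nonneg _) hΛ.le) hMs
    have h4 : (M*Real.sqrt n)*(a* |ε|) ≤ M^2*a := by
      calc (M*Real.sqrt n)*(a* |ε|) = (M*a)*(|ε| * Real.sqrt n) := by ring
      _ ≤ (M*a)*M := mul_le_mul_of_nonneg_left hεM (mul_nonneg hM.le ha.le)
      _ = M^2*a := by ring
    have h5 : (M*Real.sqrt n)*(|ε|/Λ₀) ≤ M^2/Λ₀ := by
      calc (M*Real.sqrt n)*(|ε|/Λ₀) = (M/Λ₀)*(|ε| * Real.sqrt n) := by ring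
      _ ≤ (M/Λ₀)*M := mul_le_mul_of_nonneg_left hεM (div_nonneg hM.le hΛ.le)
      _ = M^2/Λ₀ := by ring
    calc |(((n:ℝ)-m) - n*p)*(a*ε) + ((r:ℝ) - n*(Λ₀*q))*(ε/Λ₀)|
        ≤ |(((n:ℝ)-m) - n*p)*(a*ε)| + |((r:ℝ) - n*(Λ₀*q))*(ε/Λ₀)| := abs_add_le _ _
    _ ≤ M^2*a + M^2/Λ₀ := by linarith only [h1, h2, h4, h5]
    _ = M^2*(a + 1/Λ₀) := by ring
  -- bound the error terms
  have herr1 : ((n:ℝ)-m)*|Lf - a*ε| ≤ Kf*(M^2*(p+M)) := by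
    have h1 : ((n:ℝ)-m) ≤ n*p + M*Real.sqrt n := by
      have h := (abs_le.1 hs).2; linarith only [h]
    calc ((n:ℝ)-m)*|Lf - a*ε| ≤ (n*p + M*Real.sqrt n)*(Kf*ε^2) :=
        mul_le_mul h1 hRf (abs_nonneg _)
          (add_nonneg (mul_nonneg hnpos.le hp.le) (mul_nonneg hM.le (Real.sqrt_nonneg _)))
    _ = Kf*(p*((n:ℝ)*ε^2) + M*(Real.sqrt n*ε^2)) := by ring
    _ ≤ Kf*(p*M^2 + M*M^2) := by
        apply mul_le_mul_of_nonneg_left _ hKf.le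
        exact add_le_add (mul_le_mul_of_nonneg_left hA hp.le)
          (mul_le_mul_of_nonneg_left hB hM.le)
    _ = Kf*(M^2*(p+M)) := by ring
  have herr2 : (r:ℝ)*|Lg - ε/Λ₀| ≤ Kg*(M^2*(Λ₀*q+M)) := by
    have h1 : (r:ℝ) ≤ n*(Λ₀*q) + M*Real.sqrt n := by
      have h := (abs_le.1 ht).2; linarith only [h]
    have hq0 : (0:ℝ) ≤ Λ₀*q := mul_nonneg hΛ.le hq.le
    calc (r:ℝ)*|Lg - ε/Λ₀| ≤ (n*(Λ₀*q) + M*Real.sqrt n)*(Kg*ε^2) :=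
        mul_le_mul h1 hRg (abs_nonneg _)
          (add_nonneg (mul_nonneg hnpos.le hq0) (mul_nonneg hM.le (Real.sqrt_nonneg _)))
    _ = Kg*((Λ₀*q)*((n:ℝ)*ε^2) + M*(Real.sqrt n*ε^2)) := by ring
    _ ≤ Kg*((Λ₀*q)*M^2 + M*M^2) := by
        apply mul_le_mul_of_nonneg_left _ hKg.le
        exact add_le_add (mul_le_mul_of_nonneg_left hA hq0)
          (mul_le_mul_of_nonneg_left hB hM.le)
    _ = Kg*(M^2*(Λ₀*q+M)) := by ring
  -- assemble the bound on the exponent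
  have hEbound : |(-((n:ℝ)*ε) + ((n - m : ℕ):ℝ)*Lf + (r:ℝ)*Lg)| ≤ C := by
    rw [hdecomp]
    calc |((((n:ℝ)-m) - n*p)*(a*ε) + ((r:ℝ) - n*(Λ₀*q))*(ε/Λ₀))
          + ((((n:ℝ)-m))*(Lf - a*ε) + (r:ℝ)*(Lg - ε/Λ₀))|
        ≤ |(((n:ℝ)-m) - n*p)*(a*ε) + ((r:ℝ) - n*(Λ₀*q))*(ε/Λ₀)|
          + |(((n:ℝ)-m))*(Lf - a*ε) + (r:ℝ)*(Lg - ε/Λ₀)| := abs_add_le _ _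
    _ ≤ M^2*(a + 1/Λ₀) + (Kf*(M^2*(p+M)) + Kg*(M^2*(Λ₀*q+M))) := by
        have h1 : |(((n:ℝ)-m))*(Lf - a*ε) + (r:ℝ)*(Lg - ε/Λ₀)|
            ≤ ((n:ℝ)-m)*|Lf - a*ε| + (r:ℝ)*|Lg - ε/Λ₀| := by
          calc |(((n:ℝ)-m))*(Lf - a*ε) + (r:ℝ)*(Lg - ε/Λ₀)|
              ≤ |(((n:ℝ)-m))*(Lf - a*ε)| + |(r:ℝ)*(Lg - ε/Λ₀)| := abs_add_le _ _
          _ = ((n:ℝ)-m)*|Lf - a*ε| + (r:ℝ)*|Lg - ε/Λ₀| := by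
              rw [abs_mul, abs_mul, abs_of_nonneg hnm0, abs_of_nonneg (show (0:ℝ) ≤ (r:ℝ) from Nat.cast_nonneg r)]
        linarith only [h1, hmainterm, herr1, herr2]
    _ = C := by rw [hCdef]; ring
  constructor
  · exact Real.exp_le_exp.mpr (neg_le_of_abs_le hEbound)
  · exact Real.exp_le_exp.mpr (le_of_abs_le hEbound)
end

section
/- Let λ > 1 with conjugate μ ∈ (0,1) (i.e. μ·e^{−μ} = λ·e^{−λ}), set Λ₀ = λ − μ, and fix M > 0. There exist a constant c > 0 and N ∈ ℕ such that for all n ≥ N, all reals x > 0 with |x − Λ₀| ≤ M/√n, all natural numbers m, r with |m − n·(1 − e^{−Λ₀}(1 + Λ₀ + Λ₀²/2))| ≤ M√n and |r − (n/2)·Λ₀·(1 − e^{−Λ₀}(1 + Λ₀))| ≤ M√n, and every natural number s with |s − (n/2)·Λ₀·(1 − e^{−Λ₀})| ≤ M√n, the following holds: if W is a Binomial(n − m, (x²/2)/(1 + x + x²/2)) random variable, then P(r + W = s) ≤ c/√n. -/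
open Finset

noncomputable def binomPt (N : ℕ) (p : ℝ) (k : ℕ) : ℝ :=
  (N.choose k : ℝ) * p ^ k * (1 - p) ^ (N - k)

lemma binomPt_nonneg {N : ℕ} {p : ℝ} (hp0 : 0 ≤ p) (hp1 : p ≤ 1) (k : ℕ) :
    0 ≤ binomPt N p k := by
  unfold binomPt
  have : 0 ≤ 1 - p := by linarith
  positivity

lemma binomPt_sum (N : ℕ) (p : ℝ) : ∑ k ∈ range (N + 1), binomPt N p k = 1 := by
  have h := add_pow p (1 - p) N
  simp only [add_sub_cancel, one_pow] at h
  rw [show (1:ℝ) = (p + (1-p))^N by rw [add_sub_cancel]; simp, add_pow]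
  apply Finset.sum_congr rfl
  intro k _
  unfold binomPt
  ring

lemma binomPt_step {N k : ℕ} (hk : k < N) (p : ℝ) :
    binomPt N p (k + 1) * ((k + 1 : ℝ) * (1 - p))
      = binomPt N p k * (((N : ℝ) - k) * p) := by
  unfold binomPt
  have h1 : N - k = (N - (k+1)) + 1 := by omega
  have h2 : ((N.choose (k+1) : ℕ) : ℝ) * (k+1) = (N.choose k : ℝ) * ((N:ℝ) - k) := by
    have := Nat.choose_succ_right_eq N k
    have hc : ((N.choose (k+1) * (k+1) : ℕ) : ℝ) = ((N.choose k * (N - k) : ℕ) : ℝ) := by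
      exact_mod_cast congrArg (fun z : ℕ => (z : ℝ)) this
    push_cast [Nat.cast_sub hk.le] at hc
    linarith
  rw [h1, pow_succ, pow_succ]
  linear_combination h2 * (p ^ k * p * (1 - p) ^ (N - (k+1)) * (1 - p))

lemma binomPt_ratio_ge {N k : ℕ} (hk : k < N) {p ρ : ℝ} (hp0 : 0 ≤ p) (hp1 : p < 1)
    (hr : ρ * (((k : ℝ) + 1) * (1 - p)) ≤ ((N : ℝ) - k) * p) :
    ρ * binomPt N p k ≤ binomPt N p (k + 1) := by
  have h1p : (0:ℝ) < 1 - p := by linarith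
  have hpos : (0:ℝ) < ((k : ℝ) + 1) * (1 - p) := by positivity
  rw [← mul_le_mul_iff_of_pos_right hpos]
  calc ρ * binomPt N p k * (((k:ℝ)+1) * (1-p))
      = binomPt N p k * (ρ * (((k:ℝ)+1) * (1-p))) := by ring
    _ ≤ binomPt N p k * (((N:ℝ) - k) * p) :=
        mul_le_mul_of_nonneg_left hr (binomPt_nonneg hp0 hp1.le k)
    _ = binomPt N p (k+1) * (((k:ℝ)+1) * (1-p)) := (binomPt_step hk p).symm

lemma binom_point_bound (N k₀ d : ℕ) (p ρ : ℝ) (hp0 : 0 ≤ p) (hp1 : p < 1)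
    (hρ0 : 0 ≤ ρ) (hρ1 : ρ ≤ 1) (hkd : k₀ + d ≤ N)
    (hratio : ∀ k : ℕ, k₀ ≤ k → k < k₀ + d →
      ρ * (((k : ℝ) + 1) * (1 - p)) ≤ ((N : ℝ) - k) * p) :
    ((d : ℝ) + 1) * ρ ^ d * binomPt N p k₀ ≤ 1 := by
  have hstep : ∀ j : ℕ, j ≤ d → ρ ^ j * binomPt N p k₀ ≤ binomPt N p (k₀ + j) := by
    intro j hj
    induction j with
    | zero => simp
    | succ i ih =>
      have hi : i ≤ d := Nat.le_of_succ_le hj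
      have h1 := ih hi
      have h2 : ρ * binomPt N p (k₀ + i) ≤ binomPt N p (k₀ + i + 1) :=
        binomPt_ratio_ge (by omega) hp0 hp1
          (hratio (k₀ + i) (by omega) (by omega))
      calc ρ ^ (i+1) * binomPt N p k₀ = ρ * (ρ ^ i * binomPt N p k₀) := by ring
        _ ≤ ρ * binomPt N p (k₀ + i) := mul_le_mul_of_nonneg_left h1 hρ0
        _ ≤ binomPt N p (k₀ + i + 1) := h2
        _ = binomPt N p (k₀ + (i+1)) := rfl
  have hlow : ∀ j : ℕ, j ≤ d → ρ ^ d * binomPt N p k₀ ≤ binomPt N p (k₀ + j) := by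
    intro j hj
    refine le_trans ?_ (hstep j hj)
    exact mul_le_mul_of_nonneg_right (pow_le_pow_of_le_one hρ0 hρ1 hj)
      (binomPt_nonneg hp0 hp1.le k₀)
  have hsum1 : ((d : ℝ) + 1) * (ρ ^ d * binomPt N p k₀)
      ≤ ∑ j ∈ range (d + 1), binomPt N p (k₀ + j) := by
    have := Finset.sum_le_sum (f := fun _ : ℕ => ρ ^ d * binomPt N p k₀)
      (g := fun j => binomPt N p (k₀ + j)) (s := range (d+1))
      (fun j hj => hlow j (by simpa using Nat.lt_succ_iff.mp (mem_range.mp hj)))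
    simpa [Finset.sum_const, card_range, nsmul_eq_mul, add_comm] using this
  have hsum2 : ∑ j ∈ range (d + 1), binomPt N p (k₀ + j)
      ≤ ∑ k ∈ range (N + 1), binomPt N p k := by
    have he : ∑ j ∈ range (d + 1), binomPt N p (k₀ + j)
        = ∑ k ∈ Finset.Ico k₀ (k₀ + (d + 1)), binomPt N p k := by
      rw [Finset.sum_Ico_eq_sum_range]
      simp [add_comm]
    rw [he]
    apply Finset.sum_le_sum_of_subset_of_nonneg
    · intro k hk
      simp only [Finset.mem_Ico] at hk
      simp only [Finset.mem_range]
      omega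
    · exact fun k _ _ => binomPt_nonneg hp0 hp1.le k
  calc ((d:ℝ)+1) * ρ^d * binomPt N p k₀ = ((d:ℝ)+1) * (ρ^d * binomPt N p k₀) := by ring
    _ ≤ ∑ j ∈ range (d+1), binomPt N p (k₀ + j) := hsum1
    _ ≤ ∑ k ∈ range (N+1), binomPt N p k := hsum2
    _ = 1 := binomPt_sum N p

lemma exp_neg_two_le {u : ℝ} (h0 : 0 ≤ u) (h2 : u ≤ 1/2) :
    Real.exp (-(2*u)) ≤ 1 - u := by
  have h1 : 1 + 2*u ≤ Real.exp (2*u) := by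
    have := Real.add_one_le_exp (2*u); linarith
  have hpos : 0 < 1 + 2*u := by linarith
  have he : Real.exp (-(2*u)) = 1 / Real.exp (2*u) := by
    rw [Real.exp_neg]; ring
  rw [he]
  have h3 : 1 / Real.exp (2*u) ≤ 1/(1+2*u) :=
    one_div_le_one_div_of_le hpos h1
  have h4 : 1/(1+2*u) ≤ 1 - u := by
    rw [div_le_iff₀ hpos]; nlinarith
  linarith


open MeasureTheory


set_option maxHeartbeats 4000000 in
/-- Lemma 4.2 of the paper: for a 'good' kernel with `m` vertices and `r` edges, and
`W ~ Binomial(n−m, (x²/2)/(1+x+x²/2))`, the point probabilities `P(r + W = s)` in the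
window `|s − (n/2)·Λ₀·(1−e^{−Λ₀})| ≤ M√n` are at most `c/√n`. -/
theorem poisson_conf_edge_count_upper (lam mu : ℝ) (hlam : 1 < lam)
    (hmu : mu ∈ Set.Ioo (0 : ℝ) 1)
    (hconj : mu * Real.exp (-mu) = lam * Real.exp (-lam)) (M : ℝ) (hM : 0 < M) :
    ∃ c : ℝ, 0 < c ∧ ∃ N : ℕ, ∀ n : ℕ, N ≤ n →
      ∀ x : ℝ, 0 < x → |x - (lam - mu)| ≤ M / Real.sqrt n →
      ∀ m r : ℕ,
        |(m : ℝ) - n * (1 - Real.exp (-(lam - mu))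
            * (1 + (lam - mu) + (lam - mu) ^ 2 / 2))| ≤ M * Real.sqrt n →
        |(r : ℝ) - n / 2 * (lam - mu)
            * (1 - Real.exp (-(lam - mu)) * (1 + (lam - mu)))| ≤ M * Real.sqrt n →
      ∀ s : ℕ,
        |(s : ℝ) - n / 2 * (lam - mu) * (1 - Real.exp (-(lam - mu)))| ≤ M * Real.sqrt n →
      ∀ W : PMF ℕ,
        (∀ k : ℕ, W k = ENNReal.ofReal (((n - m).choose k : ℝ)
            * ((x ^ 2 / 2) / (1 + x + x ^ 2 / 2)) ^ k
            * (1 - (x ^ 2 / 2) / (1 + x + x ^ 2 / 2)) ^ (n - m - k))) →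
        (W.toMeasure {k : ℕ | r + k = s}).toReal ≤ c / Real.sqrt n := by
  obtain ⟨Λ, hΛdef⟩ : ∃ y, lam - mu = y := ⟨_, rfl⟩
  rw [hΛdef]
  have hΛ : 0 < Λ := by rw [← hΛdef]; linarith [hmu.2]
  obtain ⟨E, hEdef⟩ : ∃ y, Real.exp (-Λ) = y := ⟨_, rfl⟩
  rw [hEdef]
  have hE0 : 0 < E := hEdef ▸ Real.exp_pos _
  obtain ⟨α, hαdef⟩ : ∃ y, E * (1 + Λ + Λ^2/2) = y := ⟨_, rfl⟩
  have hDΛ1 : (1:ℝ) ≤ 1 + Λ + Λ^2/2 := by nlinarith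
  have hα0 : 0 < α := by rw [← hαdef]; positivity
  have hα1 : α < 1 := by
    have h4 : 1 + Λ + Λ^2/2 + Λ^3/6 ≤ Real.exp Λ := by
      have h := Real.sum_le_exp_of_nonneg hΛ.le 4
      have hs : ∑ i ∈ Finset.range 4, Λ ^ i / (Nat.factorial i) =
          1 + Λ + Λ^2/2 + Λ^3/6 := by
        rw [Finset.sum_range_succ, Finset.sum_range_succ, Finset.sum_range_succ,
          Finset.sum_range_one]
        norm_num [Nat.factorial]
      rw [hs] at h
      exact h
    have hlt : 1 + Λ + Λ^2/2 < Real.exp Λ := by nlinarith [pow_pos hΛ 3]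
    have heq : α = (1 + Λ + Λ^2/2) / Real.exp Λ := by
      rw [← hαdef, ← hEdef, Real.exp_neg]; ring
    rw [heq, div_lt_one (Real.exp_pos _)]
    exact hlt
  obtain ⟨D₂, hD₂def⟩ : ∃ y, 1 + 3*Λ/2 + 9*Λ^2/8 = y := ⟨_, rfl⟩
  have hD₂1 : (1:ℝ) ≤ D₂ := by nlinarith
  obtain ⟨p₁, hp₁def⟩ : ∃ y, (Λ^2/8)/D₂ = y := ⟨_, rfl⟩
  obtain ⟨q₁, hq₁def⟩ : ∃ y, 1/D₂ = y := ⟨_, rfl⟩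
  have hp₁0 : 0 < p₁ := by rw [← hp₁def]; positivity
  have hq₁0 : 0 < q₁ := by rw [← hq₁def]; positivity
  obtain ⟨K, hKdef⟩ : ∃ y, (5*Λ + 3*Λ^2)/4 = y := ⟨_, rfl⟩
  have hK0 : 0 < K := by rw [← hKdef]; positivity
  obtain ⟨B, hBdef⟩ : ∃ y, (K + 3) * M = y := ⟨_, rfl⟩
  have hB0 : 0 < B := by rw [← hBdef]; positivity
  obtain ⟨A, hAdef⟩ : ∃ y, 8*(B+3)/(α*p₁*q₁) = y := ⟨_, rfl⟩
  have hA0 : 0 < A := by rw [← hAdef]; positivity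
  obtain ⟨T, hTdef⟩ :
      ∃ y, 1 + 2*M/Λ + 2*M/α + 4*M/(Λ^2*E) + 2*A + 2*(B+2)/(α*q₁) + 4*B/(α*p₁) = y :=
    ⟨_, rfl⟩
  have hT1 : 1 ≤ T := by
    rw [← hTdef]
    have h1 : 0 ≤ 2*M/Λ := by positivity
    have h2 : 0 ≤ 2*M/α := by positivity
    have h3 : 0 ≤ 4*M/(Λ^2*E) := by positivity
    have h5 : 0 ≤ 2*(B+2)/(α*q₁) := by positivity
    have h6 : 0 ≤ 4*B/(α*p₁) := by positivity
    linarith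
  refine ⟨Real.exp (4*A), Real.exp_pos _, (⌈T⌉₊ + 1)^2, ?_⟩
  intro n hn x hx0 hxw m r hm hr s hs
  rw [hαdef] at hm
  obtain ⟨t, htdef⟩ : ∃ y, Real.sqrt n = y := ⟨_, rfl⟩
  rw [htdef] at hxw hm hr hs ⊢
  have htT : T + 1 ≤ t := by
    rw [← htdef]
    have h1 : ((⌈T⌉₊ + 1 : ℕ) : ℝ) ≤ Real.sqrt n := by
      rw [show ((⌈T⌉₊ + 1 : ℕ):ℝ) = Real.sqrt (((⌈T⌉₊ + 1 : ℕ):ℝ)^2) from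
        (Real.sqrt_sq (by positivity)).symm]
      apply Real.sqrt_le_sqrt
      have h2 : (((⌈T⌉₊ + 1)^2 : ℕ) : ℝ) ≤ (n:ℝ) := Nat.cast_le.mpr hn
      push_cast at h2 ⊢
      linarith
    calc T + 1 ≤ (⌈T⌉₊ : ℝ) + 1 := by linarith [Nat.le_ceil T]
      _ = ((⌈T⌉₊ + 1 : ℕ) : ℝ) := by push_cast; ring
      _ ≤ Real.sqrt n := h1
  rw [← hTdef] at htT
  have h1 : 0 ≤ 2*M/Λ := by positivity
  have h2 : 0 ≤ 2*M/α := by positivity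
  have h3 : 0 ≤ 4*M/(Λ^2*E) := by positivity
  have h5 : 0 ≤ 2*(B+2)/(α*q₁) := by positivity
  have h6 : 0 ≤ 4*B/(α*p₁) := by positivity
  have ht1 : 1 ≤ t := by linarith [hA0]
  have ht0 : 0 < t := by linarith
  have htsq : t^2 = (n:ℝ) := by
    rw [← htdef]; exact Real.sq_sqrt (Nat.cast_nonneg n)
  -- threshold consequences
  have hc1 : 2*M/Λ ≤ t := by linarith [hA0]
  have hc2 : 2*M/α ≤ t := by linarith [hA0]
  have hc3 : 4*M/(Λ^2*E) ≤ t := by linarith [hA0]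
  have hc4 : 2*A ≤ t := by linarith [hA0]
  have hc5 : 2*(B+2)/(α*q₁) ≤ t := by linarith [hA0]
  have hc6 : 4*B/(α*p₁) ≤ t := by linarith [hA0]
  have hMt : M/t ≤ Λ/2 := by
    rw [div_le_iff₀ ht0]
    have := (div_le_iff₀ hΛ).mp hc1
    linarith
  have hMtα : M*t ≤ α/2*t^2 := by
    have h := (div_le_iff₀ hα0).mp hc2
    linarith [mul_le_mul_of_nonneg_right h ht0.le]
  have hMtE : 2*M*t ≤ Λ^2*E/2*t^2 := by
    have h := (div_le_iff₀ (by positivity : (0:ℝ) < Λ^2*E)).mp hc3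
    linarith [mul_le_mul_of_nonneg_right h ht0.le]
  have hhalf : A/t ≤ 1/2 := by
    rw [div_le_iff₀ ht0]; linarith
  have hc5' : (B+2)*t ≤ α*q₁/2*t^2 := by
    have h := (div_le_iff₀ (by positivity : (0:ℝ) < α*q₁)).mp hc5
    linarith [mul_le_mul_of_nonneg_right h ht0.le]
  have hc6' : 2*B*t ≤ α*p₁/2*t^2 := by
    have h := (div_le_iff₀ (by positivity : (0:ℝ) < α*p₁)).mp hc6
    linarith [mul_le_mul_of_nonneg_right h ht0.le]
  -- x and P bounds
  obtain ⟨hxw1, hxw2⟩ := abs_le.mp hxw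
  have hMtnn : 0 ≤ M/t := by positivity
  have hxlo : Λ/2 ≤ x := by linarith
  have hxhi : x ≤ 3*Λ/2 := by linarith
  obtain ⟨Dx, hDxdef⟩ : ∃ y, 1 + x + x ^ 2 / 2 = y := ⟨_, rfl⟩
  rw [hDxdef]
  have hDx1 : (1:ℝ) ≤ Dx := by
    rw [← hDxdef]; linarith [sq_nonneg x]
  have hDx0 : (0:ℝ) < Dx := by linarith
  have hDxD₂ : Dx ≤ D₂ := by
    rw [← hDxdef, ← hD₂def]
    have hx2 : x^2 ≤ (3*Λ/2)^2 := pow_le_pow_left₀ hx0.le hxhi 2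
    have hre : (3*Λ/2)^2 = 9*Λ^2/4 := by ring
    linarith
  obtain ⟨P, hPdef⟩ : ∃ y, x ^ 2 / 2 / Dx = y := ⟨_, rfl⟩
  rw [hPdef]
  have hxsq_lb : Λ^2/8 ≤ x^2/2 := by
    have h := pow_le_pow_left₀ (by positivity : (0:ℝ) ≤ Λ/2) hxlo 2
    have hre : (Λ/2)^2 = Λ^2/4 := by ring
    linarith
  have hP_lb : p₁ ≤ P := by
    rw [← hPdef, ← hp₁def]
    exact div_le_div₀ (by positivity) hxsq_lb hDx0 hDxD₂
  have h1P : 1 - P = (1+x)/Dx := by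
    rw [← hPdef, ← hDxdef]
    have hne : (1 + x + x^2/2) ≠ 0 := by positivity
    field_simp
    ring
  have hQ_lb : q₁ ≤ 1 - P := by
    rw [h1P, ← hq₁def]
    apply div_le_div₀ (by positivity) (by linarith) hDx0 hDxD₂
  have hP0 : 0 < P := lt_of_lt_of_le hp₁0 hP_lb
  have hP1 : P < 1 := by linarith
  obtain ⟨PΛ, hPΛdef⟩ : ∃ y, (Λ^2/2)/(1 + Λ + Λ^2/2) = y := ⟨_, rfl⟩
  have hDΛ0 : (0:ℝ) < 1 + Λ + Λ^2/2 := by positivity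
  have hαPΛ : α * PΛ = E * (Λ^2/2) := by
    rw [← hαdef, ← hPΛdef]
    field_simp
  have hLip : |P - PΛ| ≤ K * (M/t) := by
    have key : P - PΛ = (x - Λ) * ((x + Λ + x*Λ) / (2 * Dx * (1 + Λ + Λ^2/2))) := by
      rw [← hPdef, ← hPΛdef, ← hDxdef]
      have hne1 : (1 + x + x^2/2) ≠ 0 := by positivity
      have hne2 : (1 + Λ + Λ^2/2) ≠ 0 := by positivity
      field_simp
      ring
    have hden0 : (0:ℝ) < 2 * Dx * (1 + Λ + Λ^2/2) :=
      mul_pos (mul_pos two_pos hDx0) hDΛ0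
    have hfrac_nn : 0 ≤ (x + Λ + x*Λ) / (2 * Dx * (1 + Λ + Λ^2/2)) := by
      apply div_nonneg _ hden0.le
      have := mul_pos hx0 hΛ
      linarith
    have h2K : x + Λ + x*Λ ≤ 2*K := by
      rw [← hKdef]
      have := mul_le_mul_of_nonneg_right hxhi hΛ.le
      linarith
    have hfrac_le : (x + Λ + x*Λ) / (2 * Dx * (1 + Λ + Λ^2/2)) ≤ K := by
      rw [div_le_iff₀ hden0]
      have hDD : (1:ℝ)*1 ≤ Dx * (1 + Λ + Λ^2/2) :=
        mul_le_mul hDx1 hDΛ1 (by norm_num) (by linarith)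
      have h3 := mul_le_mul_of_nonneg_left hDD (by linarith : (0:ℝ) ≤ 2*K)
      linarith
    rw [key, abs_mul, abs_of_nonneg hfrac_nn]
    have := mul_le_mul hxw hfrac_le hfrac_nn hMtnn
    linarith
  -- m, N', k₀ windows
  obtain ⟨hm1, hm2⟩ := abs_le.mp hm
  have hαn : α/2*t^2 = α/2*(n:ℝ) := by rw [htsq]
  have hnα0 : (0:ℝ) ≤ (n:ℝ)*α := by positivity
  have hmn : m ≤ n := by
    have hcast : (m:ℝ) ≤ (n:ℝ) := by linarith
    exact_mod_cast hcast
  have hNcast : ((n - m : ℕ) : ℝ) = (n:ℝ) - m := by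
    rw [Nat.cast_sub hmn]
  have hN'w : |((n - m : ℕ):ℝ) - (n:ℝ)*α| ≤ M*t := by
    rw [hNcast, show (n:ℝ) - m - n*α = -((m:ℝ) - n*(1-α)) from by ring, abs_neg]
    exact hm
  have hN'lb : α/2*t^2 ≤ ((n - m : ℕ):ℝ) := by
    rw [hNcast]
    linarith
  obtain ⟨hr1, hr2⟩ := abs_le.mp hr
  obtain ⟨hs1, hs2⟩ := abs_le.mp hs
  have hcen : (n:ℝ)/2*Λ*(1 - E) - (n:ℝ)/2*Λ*(1 - E*(1+Λ)) = Λ^2*E/2*(n:ℝ) := by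
    ring
  have hEn : Λ^2*E/2*(n:ℝ) = Λ^2*E/2*t^2 := by rw [htsq]
  have hrs : r ≤ s := by
    have hcast : (r:ℝ) ≤ (s:ℝ) := by linarith
    exact_mod_cast hcast
  have hk₀cast : ((s - r : ℕ):ℝ) = (s:ℝ) - r := by
    rw [Nat.cast_sub hrs]
  have hk₀w : |((s - r : ℕ):ℝ) - Λ^2*E/2*t^2| ≤ 2*M*t := by
    rw [hk₀cast, abs_le]
    constructor <;> linarith
  have hNP1 : |((n - m : ℕ):ℝ)*P - (n:ℝ)*α*P| ≤ M*t := by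
    rw [show ((n - m : ℕ):ℝ)*P - (n:ℝ)*α*P = (((n - m : ℕ):ℝ) - (n:ℝ)*α)*P from by ring,
      abs_mul, abs_of_nonneg hP0.le]
    have := mul_le_mul hN'w hP1.le hP0.le (by positivity : (0:ℝ) ≤ M*t)
    linarith
  have hNP2 : |(n:ℝ)*α*P - (n:ℝ)*α*PΛ| ≤ K*M*t := by
    rw [show (n:ℝ)*α*P - (n:ℝ)*α*PΛ = ((n:ℝ)*α)*(P - PΛ) from by ring, abs_mul,
      abs_of_nonneg hnα0]
    have h0n : (0:ℝ) ≤ (n:ℝ) := Nat.cast_nonneg n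
    have hna : (n:ℝ)*α ≤ t^2 := by
      rw [htsq]
      have := mul_le_mul_of_nonneg_left hα1.le h0n
      linarith
    calc ((n:ℝ)*α)*|P - PΛ| ≤ t^2*(K*(M/t)) :=
        mul_le_mul hna hLip (abs_nonneg _) (by positivity)
      _ = K*M*t := by field_simp
  have hnαPΛ : (n:ℝ)*α*PΛ = Λ^2*E/2*t^2 := by
    rw [← htsq]
    linear_combination t^2 * hαPΛ
  have hmean : |((n - m : ℕ):ℝ)*P - Λ^2*E/2*t^2| ≤ (K+1)*(M*t) := by
    rw [← hnαPΛ]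
    calc |((n - m : ℕ):ℝ)*P - (n:ℝ)*α*PΛ|
        ≤ |((n - m : ℕ):ℝ)*P - (n:ℝ)*α*P| + |(n:ℝ)*α*P - (n:ℝ)*α*PΛ| := abs_sub_le _ _ _
      _ ≤ M*t + K*M*t := add_le_add hNP1 hNP2
      _ = (K+1)*(M*t) := by ring
  have hdev : |((s - r : ℕ):ℝ) - ((n - m : ℕ):ℝ)*P| ≤ B*t := by
    calc |((s - r : ℕ):ℝ) - ((n - m : ℕ):ℝ)*P|
        ≤ |((s - r : ℕ):ℝ) - Λ^2*E/2*t^2| + |Λ^2*E/2*t^2 - ((n - m : ℕ):ℝ)*P| :=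
          abs_sub_le _ _ _
      _ ≤ 2*M*t + (K+1)*(M*t) := add_le_add hk₀w (by rw [abs_sub_comm]; exact hmean)
      _ = B*t := by rw [← hBdef]; ring
  obtain ⟨hdev1, hdev2⟩ := abs_le.mp hdev
  obtain ⟨d, hddef⟩ : ∃ y : ℕ, ⌈t⌉₊ = y := ⟨_, rfl⟩
  have hd1 : t ≤ (d:ℝ) := hddef ▸ Nat.le_ceil t
  have hd2 : (d:ℝ) ≤ t + 1 := by
    rw [← hddef]
    exact (Nat.ceil_lt_add_one ht0.le).le
  have hN0 : (0:ℝ) ≤ ((n - m : ℕ):ℝ) := Nat.cast_nonneg _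
  have hNQ : α*q₁/2*t^2 ≤ ((n - m : ℕ):ℝ)*(1-P) := by
    have h := mul_le_mul hN'lb hQ_lb hq₁0.le hN0
    linarith
  have hkdN : (s - r) + d ≤ (n - m) := by
    have hexp : ((n - m : ℕ):ℝ)*(1-P) = ((n - m : ℕ):ℝ) - ((n - m : ℕ):ℝ)*P := by ring
    have hc : ((s - r : ℕ):ℝ) + (d:ℝ) ≤ ((n - m : ℕ):ℝ) := by linarith
    exact_mod_cast hc
  have hAt0' : 0 ≤ A/t := by positivity
  have hBt0 : 0 < (B+1)*t := mul_pos (by linarith) ht0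
  have hratio : ∀ k : ℕ, (s - r) ≤ k → k < (s - r) + d →
      (1 - A/t) * (((k:ℝ) + 1) * (1 - P)) ≤ (((n - m : ℕ):ℝ) - (k:ℝ)) * P := by
    intro k hk1 hk2
    have hκ1 : ((s - r : ℕ):ℝ) ≤ (k:ℝ) := Nat.cast_le.mpr hk1
    have hκ2 : (k:ℝ) + 1 ≤ ((s - r : ℕ):ℝ) + (d:ℝ) := by
      have h := (Nat.cast_le (α := ℝ)).mpr (Nat.succ_le_of_lt hk2)
      push_cast at h
      linarith
    have hS_lb0 : α*p₁/2*t^2 ≤ ((n - m : ℕ):ℝ)*P := by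
      have h := mul_le_mul hN'lb hP_lb hp₁0.le hN0
      linarith
    have hS2B : 2*B*t ≤ ((n - m : ℕ):ℝ)*P := le_trans hc6' hS_lb0
    have hk1' : ((n - m : ℕ):ℝ)*P/2 ≤ (k:ℝ) + 1 := by linarith
    have hApq : A*(α*p₁*q₁) = 8*(B+3) := by
      rw [← hAdef]
      field_simp
    have hprod : α*p₁/4*t^2*q₁ ≤ ((k:ℝ)+1)*(1-P) := by
      have h := mul_le_mul (show α*p₁/4*t^2 ≤ (k:ℝ)+1 from by linarith)
        hQ_lb hq₁0.le (by linarith : (0:ℝ) ≤ (k:ℝ)+1)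
      linarith
    have hf2 : 2*(B+3)*t ≤ A/t * (((k:ℝ)+1)*(1-P)) := by
      have h := mul_le_mul_of_nonneg_left hprod hAt0'
      have he : A/t*(α*p₁/4*t^2*q₁) = A*(α*p₁*q₁)*t/4 := by
        field_simp
      rw [he, hApq] at h
      linarith
    have hk_ub : (k:ℝ)+1 ≤ ((n - m : ℕ):ℝ)*P + (B+1)*t + 1 := by linarith
    have hub : ((k:ℝ)+1)*(1-P) ≤ ((n - m : ℕ):ℝ)*P*(1-P) + ((B+1)*t+1) := by
      have h8 := mul_le_mul_of_nonneg_right hk_ub (by linarith : (0:ℝ) ≤ 1-P)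
      have h9 : ((B+1)*t+1)*(1-P) ≤ ((B+1)*t+1)*1 :=
        mul_le_mul_of_nonneg_left (by linarith) (by linarith)
      linarith [h8, h9]
    have hlb : ((n - m : ℕ):ℝ)*P*(1-P) - (B+1)*t ≤ (((n - m : ℕ):ℝ) - (k:ℝ))*P := by
      have h10 : ((n - m : ℕ):ℝ)*(1-P) - (B+1)*t ≤ ((n - m : ℕ):ℝ) - (k:ℝ) := by linarith
      have h11 := mul_le_mul_of_nonneg_right h10 hP0.le
      have h12 : (B+1)*t*P ≤ (B+1)*t*1 := mul_le_mul_of_nonneg_left hP1.le hBt0.le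
      linarith [h11, h12]
    have hexp2 : (1 - A/t) * (((k:ℝ)+1)*(1-P))
        = ((k:ℝ)+1)*(1-P) - A/t * (((k:ℝ)+1)*(1-P)) := by ring
    rw [hexp2]
    linarith
  have hbound := binom_point_bound (n - m) (s - r) d P (1 - A/t) hP0.le hP1
    (by linarith) (by linarith) hkdN hratio
  have hρexp : Real.exp (-(2*(A/t))) ≤ 1 - A/t := exp_neg_two_le (by positivity) hhalf
  have hd2t : (d:ℝ) ≤ 2*t := by linarith
  have hpow : Real.exp (-(4*A)) ≤ (1 - A/t)^d := by
    have hmul : (d:ℝ) * (2*(A/t)) ≤ 2*t*(2*(A/t)) :=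
      mul_le_mul_of_nonneg_right hd2t (by positivity)
    have he : 2*t*(2*(A/t)) = 4*A := by
      field_simp
      ring
    have h1 : Real.exp (-(4*A)) ≤ Real.exp ((d:ℝ) * (-(2*(A/t)))) := by
      apply Real.exp_le_exp.mpr
      linarith [hmul, he]
    have h2 : Real.exp ((d:ℝ) * (-(2*(A/t)))) = (Real.exp (-(2*(A/t))))^d :=
      Real.exp_nat_mul _ d
    calc Real.exp (-(4*A)) ≤ Real.exp ((d:ℝ) * (-(2*(A/t)))) := h1
      _ = (Real.exp (-(2*(A/t))))^d := h2
      _ ≤ (1 - A/t)^d := pow_le_pow_left₀ (Real.exp_pos _).le hρexp d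
  have hb0 : 0 ≤ binomPt (n - m) P (s - r) := binomPt_nonneg hP0.le hP1.le _
  have hfin : binomPt (n - m) P (s - r) ≤ Real.exp (4*A) / t := by
    have hge : t * Real.exp (-(4*A)) ≤ ((d:ℝ)+1) * (1 - A/t)^d :=
      mul_le_mul (by linarith) hpow (Real.exp_pos _).le (by positivity)
    have h1 : binomPt (n - m) P (s - r) * (t * Real.exp (-(4*A))) ≤ 1 := by
      calc binomPt (n - m) P (s - r) * (t * Real.exp (-(4*A)))
          ≤ binomPt (n - m) P (s - r) * (((d:ℝ)+1) * (1 - A/t)^d) :=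
            mul_le_mul_of_nonneg_left hge hb0
        _ = ((d:ℝ)+1) * (1 - A/t)^d * binomPt (n - m) P (s - r) := by ring
        _ ≤ 1 := hbound
    have hee : Real.exp (-(4*A)) * Real.exp (4*A) = 1 := by
      rw [← Real.exp_add]
      simp
    rw [le_div_iff₀ ht0]
    calc binomPt (n - m) P (s - r) * t
        = binomPt (n - m) P (s - r) * (t * Real.exp (-(4*A))) * Real.exp (4*A) := by
          linear_combination (-(binomPt (n - m) P (s - r) * t)) * hee
      _ ≤ 1 * Real.exp (4*A) := mul_le_mul_of_nonneg_right h1 (Real.exp_pos _).le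
      _ = Real.exp (4*A) := one_mul _
  intro W hW
  have hseteq : {k : ℕ | r + k = s} = {s - r} := by
    ext k
    simp only [Set.mem_setOf_eq, Set.mem_singleton_iff]
    omega
  rw [hseteq, PMF.toMeasure_apply_singleton _ _ (measurableSet_singleton _), hW (s - r),
    ENNReal.toReal_ofReal (by exact binomPt_nonneg hP0.le hP1.le (s - r))]
  exact hfin
end

section
/- Let λ > 1 with conjugate μ ∈ (0,1) (i.e. μ·e^{−μ} = λ·e^{−λ}) and fix M > 0. There exist a constant c > 0 and N ∈ ℕ such that for all n ≥ N and all positive integers r, s with |r − (n/2)(λ−μ)(1−μ/λ)(1−μ)| ≤ M√n and |s − (n/2)(λ−μ)(1−μ/λ)| ≤ M√n, the following holds: if X_1, …, X_r are i.i.d. random variables with P(X_i = k) = μ^{k−1}(1−μ) for every integer k ≥ 1, then P(X_1 + ⋯ + X_r = s) ≥ c/√n. -/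
set_option maxHeartbeats 1000000

open Real MeasureTheory


lemma sum_map_range (n : ℕ) (g : ℕ → ℕ) : (((List.range n).map g).sum) = ∑ i ∈ Finset.range n, g i := by
  rw [Finset.sum_range, ← List.sum_ofFn]
  congr 1
  apply List.ext_getElem <;> simp

lemma AT_length : ∀ (k n : ℕ), (List.Nat.antidiagonalTuple (k+1) n).length = (n + k).choose k := by
  intro k
  induction k with
  | zero => intro n; simp [List.Nat.antidiagonalTuple_one]
  | succ k ih =>
    intro n
    rw [List.Nat.antidiagonalTuple, List.length_flatMap]
    simp only [List.Nat.antidiagonal, List.map_map, Function.comp_def, List.length_map]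
    rw [sum_map_range]
    simp only [ih]
    rw [← Finset.sum_range_reflect]
    have h1 : ∀ j ∈ Finset.range (n+1), (n - (n + 1 - 1 - j) + k).choose k = (j + k).choose k := by
      intro j hj
      simp only [Finset.mem_range] at hj
      congr 2
      omega
    rw [Finset.sum_congr rfl h1, Nat.sum_range_add_choose]
    congr 1

lemma AT_card (k n : ℕ) : (Finset.Nat.antidiagonalTuple (k+1) n).card = (n + k).choose k :=
  AT_length k n

lemma AT_card' (r m : ℕ) (hr : 1 ≤ r) :
    (Finset.Nat.antidiagonalTuple r m).card = (m + (r-1)).choose (r-1) := by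
  cases r with
  | zero => omega
  | succ k => simpa using AT_card k m

lemma sum_sub_one (r : ℕ) (f : Fin r → ℕ) (hpos : ∀ i, 1 ≤ f i) :
    (∑ i, (f i - 1)) + r = ∑ i, f i := by
  have : (∑ i, (f i - 1)) + r = ∑ i : Fin r, ((f i - 1) + 1) := by
    rw [Finset.sum_add_distrib]
    simp
  rw [this]
  exact Finset.sum_congr rfl fun i _ => by have := hpos i; omega

lemma pos_card (r s : ℕ) (hr : 1 ≤ r) (hrs : r ≤ s) :
    ((Finset.Nat.antidiagonalTuple r s).filter (fun f => ∀ i, 1 ≤ f i)).card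
      = (s-1).choose (r-1) := by
  have key : ((Finset.Nat.antidiagonalTuple r s).filter (fun f => ∀ i, 1 ≤ f i)).card
      = (Finset.Nat.antidiagonalTuple r (s - r)).card := by
    apply Finset.card_nbij' (fun f => fun i => f i - 1) (fun g => fun i => g i + 1)
    · intro f hf
      simp only [Finset.mem_coe, Finset.mem_filter, Finset.Nat.mem_antidiagonalTuple] at hf ⊢
      have := sum_sub_one r f hf.2
      omega
    · intro g hg
      simp only [Finset.mem_coe, Finset.Nat.mem_antidiagonalTuple] at hg
      simp only [Finset.mem_coe, Finset.mem_filter, Finset.Nat.mem_antidiagonalTuple]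
      refine ⟨?_, fun i => by omega⟩
      rw [Finset.sum_add_distrib, hg]
      simp only [Finset.sum_const, Finset.card_univ, Fintype.card_fin, smul_eq_mul, mul_one]
      omega
    · intro f hf
      simp only [Finset.mem_coe, Finset.mem_filter] at hf
      funext i
      show f i - 1 + 1 = f i
      have := hf.2 i
      omega
    · intro g _
      funext i
      show g i + 1 - 1 = g i
      omega
  rw [key, AT_card' r (s - r) hr]
  have h3 : s - r + (r - 1) = s - 1 := by clear key; omega
  rw [h3]


lemma stirlingSeq_ge (m : ℕ) : Real.sqrt π ≤ Stirling.stirlingSeq (m+1) := by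
  have h1 : Filter.Tendsto (fun k => Stirling.stirlingSeq (k+1)) Filter.atTop (nhds (Real.sqrt π)) :=
    Stirling.tendsto_stirlingSeq_sqrt_pi.comp (Filter.tendsto_add_atTop_nat 1)
  exact Antitone.le_of_tendsto Stirling.stirlingSeq'_antitone h1 m

lemma stirlingSeq_le (m : ℕ) : Stirling.stirlingSeq (m+1) ≤ 2 := by
  have h1 : Stirling.stirlingSeq (m+1) ≤ Stirling.stirlingSeq 1 :=
    Stirling.stirlingSeq'_antitone (Nat.zero_le m)
  refine h1.trans ?_
  rw [Stirling.stirlingSeq_one]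
  rw [div_le_iff₀ (by positivity)]
  have h2 : Real.exp 1 < 2.7182818286 := Real.exp_one_lt_d9
  have h3 : (1.4 : ℝ) ≤ Real.sqrt 2 := by
    rw [show (1.4:ℝ) = Real.sqrt (1.4^2) by rw [Real.sqrt_sq]; norm_num]
    apply Real.sqrt_le_sqrt; norm_num
  nlinarith

lemma stirling_lo (m : ℕ) (hm : 1 ≤ m) :
    Real.sqrt π * (Real.sqrt (2*m) * ((m:ℝ)/Real.exp 1)^m) ≤ (m.factorial : ℝ) := by
  obtain ⟨k, rfl⟩ : ∃ k, m = k + 1 := ⟨m - 1, by omega⟩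
  have h1 := stirlingSeq_ge k
  have h2 : (0:ℝ) < Real.sqrt (2*(k+1:ℕ)) * (((k+1:ℕ):ℝ)/Real.exp 1)^(k+1) := by positivity
  have h3 : Stirling.stirlingSeq (k+1)
      = (k+1).factorial / (Real.sqrt (2*(k+1:ℕ)) * (((k+1:ℕ):ℝ)/Real.exp 1)^(k+1)) := rfl
  rw [h3, le_div_iff₀ h2] at h1
  linarith

lemma stirling_hi (m : ℕ) (hm : 1 ≤ m) :
    (m.factorial : ℝ) ≤ 2 * (Real.sqrt (2*m) * ((m:ℝ)/Real.exp 1)^m) := by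
  obtain ⟨k, rfl⟩ : ∃ k, m = k + 1 := ⟨m - 1, by omega⟩
  have h1 := stirlingSeq_le k
  have h2 : (0:ℝ) < Real.sqrt (2*(k+1:ℕ)) * (((k+1:ℕ):ℝ)/Real.exp 1)^(k+1) := by positivity
  have h3 : Stirling.stirlingSeq (k+1)
      = (k+1).factorial / (Real.sqrt (2*(k+1:ℕ)) * (((k+1:ℕ):ℝ)/Real.exp 1)^(k+1)) := rfl
  rw [h3, div_le_iff₀ h2] at h1
  linarith

lemma log_ge (x : ℝ) (hx : 0 < x) : 1 - 1/x ≤ Real.log x := by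
  have h := Real.log_le_sub_one_of_pos (show (0:ℝ) < 1/x by positivity)
  rw [Real.log_div one_ne_zero hx.ne', Real.log_one] at h
  linarith

-- key algebraic identity for the KL bound
example (mu rB rC : ℝ) (h0 : 0 < mu) (h1 : mu < 1) (hB : 0 < rB) (hC : 0 < rC) :
    rB * (1 - rB/((1-mu)*(rB+rC))) + rC * (1 - rC/(mu*(rB+rC)))
      = -((rB - (1-mu)*(rB+rC))^2/((rB+rC)*mu*(1-mu))) := by
  have hA : rB + rC ≠ 0 := by positivity
  have hm : mu ≠ 0 := h0.ne'
  have hm1 : (1:ℝ) - mu ≠ 0 := by linarith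
  field_simp
  ring

-- E ≥ exp(-kl)
lemma E_ge (mu : ℝ) (h0 : 0 < mu) (h1 : mu < 1) (B C : ℕ) (hB : 1 ≤ B) (hC : 1 ≤ C) :
    Real.exp (-(((B:ℝ) - (1-mu)*((B:ℝ)+(C:ℝ)))^2/(((B:ℝ)+(C:ℝ))*mu*(1-mu))))
      ≤ ((1-mu)*((B:ℝ)+(C:ℝ))/(B:ℝ))^B * (mu*((B:ℝ)+(C:ℝ))/(C:ℝ))^C := by
  have hrB : (0:ℝ) < B := by exact_mod_cast hB
  have hrC : (0:ℝ) < C := by exact_mod_cast hC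
  have hm1 : (0:ℝ) < 1 - mu := by linarith
  set rB := (B:ℝ); set rC := (C:ℝ)
  have hx : (0:ℝ) < (1-mu)*(rB+rC)/rB := by positivity
  have hy : (0:ℝ) < mu*(rB+rC)/rC := by positivity
  have ex : ((1-mu)*(rB+rC)/rB)^B = Real.exp ((B:ℝ) * Real.log ((1-mu)*(rB+rC)/rB)) := by
    rw [← Real.exp_log hx, ← Real.exp_nat_mul, Real.log_exp]
  have ey : (mu*(rB+rC)/rC)^C = Real.exp ((C:ℝ) * Real.log (mu*(rB+rC)/rC)) := by
    rw [← Real.exp_log hy, ← Real.exp_nat_mul, Real.log_exp]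
  rw [ex, ey, ← Real.exp_add, Real.exp_le_exp]
  have lx := log_ge _ hx
  have ly := log_ge _ hy
  have hxx : 1/((1-mu)*(rB+rC)/rB) = rB/((1-mu)*(rB+rC)) := by
    rw [one_div, inv_div]
  have hyy : 1/(mu*(rB+rC)/rC) = rC/(mu*(rB+rC)) := by
    rw [one_div, inv_div]
  rw [hxx] at lx; rw [hyy] at ly
  have ident : rB * (1 - rB/((1-mu)*(rB+rC))) + rC * (1 - rC/(mu*(rB+rC)))
      = -((rB - (1-mu)*(rB+rC))^2/((rB+rC)*mu*(1-mu))) := by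
    have hA : rB + rC ≠ 0 := by positivity
    field_simp
    ring
  calc -((rB - (1-mu)*(rB+rC))^2/((rB+rC)*mu*(1-mu)))
      = rB * (1 - rB/((1-mu)*(rB+rC))) + rC * (1 - rC/(mu*(rB+rC))) := ident.symm
    _ ≤ rB * Real.log ((1-mu)*(rB+rC)/rB) + rC * Real.log (mu*(rB+rC)/rC) := by
        have := mul_le_mul_of_nonneg_left lx hrB.le
        have := mul_le_mul_of_nonneg_left ly hrC.le
        linarith [mul_le_mul_of_nonneg_left lx hrB.le, mul_le_mul_of_nonneg_left ly hrC.le]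

lemma choose_eq_div (B C : ℕ) :
    (((B+C).choose B : ℕ) : ℝ) = ((B+C).factorial : ℝ)/((B.factorial : ℝ)*(C.factorial : ℝ)) := by
  have h := Nat.choose_mul_factorial_mul_factorial (Nat.le_add_right B C)
  have h2 : B + C - B = C := by omega
  rw [h2] at h
  have hB : (0:ℝ) < (B.factorial : ℝ) := by exact_mod_cast B.factorial_pos
  have hC : (0:ℝ) < (C.factorial : ℝ) := by exact_mod_cast C.factorial_pos
  field_simp
  exact_mod_cast congrArg (Nat.cast : ℕ → ℝ) h

lemma q_lower (mu : ℝ) (h0 : 0 < mu) (h1 : mu < 1) (B C : ℕ) (hB : 1 ≤ B) (hC : 1 ≤ C) :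
    Real.sqrt π / 4 * (1-mu) *
      Real.exp (-(((B:ℝ) - (1-mu)*((B:ℝ)+(C:ℝ)))^2/(((B:ℝ)+(C:ℝ))*mu*(1-mu))))
      / Real.sqrt (2*((B:ℝ)+(C:ℝ)))
      ≤ ((B+C).choose B : ℝ) * mu^C * (1-mu)^(B+1) := by
  have hrB : (0:ℝ) < B := by exact_mod_cast hB
  have hrC : (0:ℝ) < C := by exact_mod_cast hC
  have hm1 : (0:ℝ) < 1 - mu := by linarith
  set rB := (B:ℝ) with hrBdef
  set rC := (C:ℝ) with hrCdef
  have hrA : (0:ℝ) < rB + rC := by linarith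
  set e := Real.exp 1 with hedef
  have he : (0:ℝ) < e := Real.exp_pos 1
  set stA := Real.sqrt (2*(rB+rC)) * ((rB+rC)/e)^(B+C) with hstA
  set stB := Real.sqrt (2*rB) * (rB/e)^B with hstB
  set stC := Real.sqrt (2*rC) * (rC/e)^C with hstC
  have hstApos : 0 < stA := by rw [hstA]; positivity
  have hstBpos : 0 < stB := by rw [hstB]; positivity
  have hstCpos : 0 < stC := by rw [hstC]; positivity
  -- factorial bounds
  have hcastA : ((B+C : ℕ) : ℝ) = rB + rC := by push_cast; ring
  have hfA : Real.sqrt π * stA ≤ ((B+C).factorial : ℝ) := by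
    have := stirling_lo (B+C) (by omega)
    rw [hcastA] at this
    exact this
  have hfB : (B.factorial : ℝ) ≤ 2 * stB := by
    have := stirling_hi B hB
    rwa [← hrBdef] at this
  have hfC : (C.factorial : ℝ) ≤ 2 * stC := by
    have := stirling_hi C hC
    rwa [← hrCdef] at this
  -- choose lower bound
  have hch : (Real.sqrt π * stA)/((2*stB)*(2*stC)) ≤ ((B+C).choose B : ℝ) := by
    rw [choose_eq_div]
    apply div_le_div₀ (by positivity) hfA (by positivity)
    exact mul_le_mul hfB hfC (by positivity) (by positivity)
  have h5 : Real.sqrt π/4 * (stA/(stB*stC)) ≤ ((B+C).choose B : ℝ) := by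
    refine le_trans (le_of_eq ?_) hch
    field_simp
    ring
  -- the key algebraic identity
  set E := ((1-mu)*(rB+rC)/rB)^B * (mu*(rB+rC)/rC)^C with hE
  have keyeq : stA/(stB*stC) * (mu^C * (1-mu)^B)
      = (Real.sqrt (2*(rB+rC))/(Real.sqrt (2*rB)*Real.sqrt (2*rC))) * E := by
    rw [hstA, hstB, hstC, hE]
    have e1 : ((1-mu)*(rB+rC)/rB)^B = (1-mu)^B * (rB+rC)^B / rB^B := by
      rw [div_pow, mul_pow]
    have e2 : (mu*(rB+rC)/rC)^C = mu^C * (rB+rC)^C / rC^C := by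
      rw [div_pow, mul_pow]
    have e3 : ((rB+rC)/e)^(B+C) = (rB+rC)^B * (rB+rC)^C / (e^B * e^C) := by
      rw [div_pow, pow_add, pow_add]
    have e4 : (rB/e)^B = rB^B/e^B := by rw [div_pow]
    have e5 : (rC/e)^C = rC^C/e^C := by rw [div_pow]
    rw [e1, e2, e3, e4, e5]
    have h6 : rB^B ≠ 0 := by positivity
    have h7 : rC^C ≠ 0 := by positivity
    have h8 : e^B ≠ 0 := by positivity
    have h9 : e^C ≠ 0 := by positivity
    have h10 : Real.sqrt (2*rB) ≠ 0 := by positivity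
    have h11 : Real.sqrt (2*rC) ≠ 0 := by positivity
    field_simp
  -- sqrt ratio lower bound
  have hsqrt : 1/Real.sqrt (2*(rB+rC))
      ≤ Real.sqrt (2*(rB+rC))/(Real.sqrt (2*rB)*Real.sqrt (2*rC)) := by
    have hss : Real.sqrt (2*rB)*Real.sqrt (2*rC) ≤ 2*(rB+rC) := by
      rw [← Real.sqrt_mul (by linarith) (2*rC)]
      rw [show 2*(rB+rC) = Real.sqrt ((2*(rB+rC))^2) from (Real.sqrt_sq (by linarith)).symm]
      apply Real.sqrt_le_sqrt
      nlinarith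
    have h12 : 0 < Real.sqrt (2*rB)*Real.sqrt (2*rC) := by positivity
    have h13 : 1/Real.sqrt (2*(rB+rC)) = Real.sqrt (2*(rB+rC))/(2*(rB+rC)) := by
      rw [div_eq_div_iff (by positivity) (by positivity), one_mul]
      exact (Real.mul_self_sqrt (by positivity)).symm
    rw [h13]
    apply div_le_div_of_nonneg_left (by positivity) h12 hss
  -- KL bound
  have hEge : Real.exp (-((rB - (1-mu)*(rB+rC))^2/((rB+rC)*mu*(1-mu)))) ≤ E :=
    E_ge mu h0 h1 B C hB hC
  -- assembly
  calc Real.sqrt π / 4 * (1-mu) *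
        Real.exp (-((rB - (1-mu)*(rB+rC))^2/((rB+rC)*mu*(1-mu)))) / Real.sqrt (2*(rB+rC))
      = Real.sqrt π/4 * ((1/Real.sqrt (2*(rB+rC))) *
          Real.exp (-((rB - (1-mu)*(rB+rC))^2/((rB+rC)*mu*(1-mu))))) * (1-mu) := by ring
    _ ≤ Real.sqrt π/4 * ((Real.sqrt (2*(rB+rC))/(Real.sqrt (2*rB)*Real.sqrt (2*rC))) * E)
          * (1-mu) := by
        apply mul_le_mul_of_nonneg_right _ hm1.le
        apply mul_le_mul_of_nonneg_left _ (by positivity)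
        exact mul_le_mul hsqrt hEge (Real.exp_pos _).le (by positivity)
    _ = Real.sqrt π/4 * (stA/(stB*stC) * (mu^C * (1-mu)^B)) * (1-mu) := by rw [keyeq]
    _ = Real.sqrt π/4 * (stA/(stB*stC)) * (mu^C * (1-mu)^(B+1)) := by ring
    _ ≤ ((B+C).choose B : ℝ) * (mu^C * (1-mu)^(B+1)) := by
        apply mul_le_mul_of_nonneg_right h5 (by positivity)
    _ = ((B+C).choose B : ℝ) * mu^C * (1-mu)^(B+1) := by ring


lemma measure_value (mu : ℝ) (hmu0 : 0 < mu) (hmu1 : mu < 1) (r s : ℕ)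
    (hr : 1 ≤ r) (hrs : r ≤ s) (X : PMF ℕ)
    (hX : ∀ k : ℕ, X k = ENNReal.ofReal (if 1 ≤ k then mu ^ (k - 1) * (1 - mu) else 0)) :
    ((MeasureTheory.Measure.pi fun _ : Fin r => X.toMeasure)
        {f : Fin r → ℕ | ∑ i, f i = s}).toReal
      = ((s-1).choose (r-1) : ℝ) * mu^(s-r) * (1-mu)^r := by
  have hmeas : (MeasureTheory.Measure.pi fun _ : Fin r => X.toMeasure)
      {f : Fin r → ℕ | ∑ i, f i = s}
      = ∑ f ∈ Finset.Nat.antidiagonalTuple r s, ∏ i, X (f i) := by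
    have h0 : {f : Fin r → ℕ | ∑ i, f i = s}
        = ⋃ f ∈ Finset.Nat.antidiagonalTuple r s, {f} := by
      ext g
      simp [Finset.Nat.mem_antidiagonalTuple]
    rw [h0, MeasureTheory.measure_biUnion_finset]
    · refine Finset.sum_congr rfl fun f _ => ?_
      have h1 : ({f} : Set (Fin r → ℕ)) = Set.pi Set.univ (fun i => {f i}) := by
        ext g; simp [Set.mem_pi, funext_iff]
      rw [h1, MeasureTheory.Measure.pi_pi]
      exact Finset.prod_congr rfl fun i _ =>
        X.toMeasure_apply_singleton _ (measurableSet_singleton _)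
    · intro a _ b _ hab
      simp [Function.onFun, Set.disjoint_singleton, hab]
    · exact fun b _ => measurableSet_singleton b
  have hsum : ∑ f ∈ Finset.Nat.antidiagonalTuple r s, ∏ i, X (f i)
      = ((Finset.Nat.antidiagonalTuple r s).filter (fun f => ∀ i, 1 ≤ f i)).card
          * ENNReal.ofReal (mu ^ (s - r) * (1 - mu) ^ r) := by
    rw [← Finset.sum_filter_add_sum_filter_not _ (fun f => ∀ i, 1 ≤ f i)]
    have h2 : ∑ f ∈ (Finset.Nat.antidiagonalTuple r s).filter (fun f => ¬ ∀ i, 1 ≤ f i),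
        ∏ i, X (f i) = 0 := by
      apply Finset.sum_eq_zero
      intro f hf
      simp only [Finset.mem_filter, not_forall] at hf
      obtain ⟨i, hi⟩ := hf.2
      apply Finset.prod_eq_zero (Finset.mem_univ i)
      rw [hX]
      have : ¬ (1 ≤ f i) := by omega
      simp [this]
    rw [h2, add_zero]
    have h3 : ∀ f ∈ (Finset.Nat.antidiagonalTuple r s).filter (fun f => ∀ i, 1 ≤ f i),
        ∏ i, X (f i) = ENNReal.ofReal (mu ^ (s - r) * (1 - mu) ^ r) := by
      intro f hf
      simp only [Finset.mem_filter, Finset.Nat.mem_antidiagonalTuple] at hf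
      obtain ⟨hsum, hpos⟩ := hf
      have hstep : ∀ i : Fin r, X (f i) = ENNReal.ofReal (mu ^ (f i - 1) * (1 - mu)) := by
        intro i
        rw [hX]
        simp [hpos i]
      calc ∏ i, X (f i) = ∏ i, ENNReal.ofReal (mu ^ (f i - 1) * (1 - mu)) :=
            Finset.prod_congr rfl fun i _ => hstep i
        _ = ENNReal.ofReal (∏ i, mu ^ (f i - 1) * (1 - mu)) := by
            rw [← ENNReal.ofReal_prod_of_nonneg]
            intro i _
            have h4 : (0:ℝ) ≤ mu ^ (f i - 1) := pow_nonneg hmu0.le _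
            nlinarith
        _ = ENNReal.ofReal (mu ^ (s - r) * (1 - mu) ^ r) := by
            congr 1
            rw [Finset.prod_mul_distrib, Finset.prod_pow_eq_pow_sum, Finset.prod_const]
            have h5 := sum_sub_one r f hpos
            have h6 : ∑ i, (f i - 1) = s - r := by omega
            simp [h6]
    rw [Finset.sum_congr rfl h3, Finset.sum_const, nsmul_eq_mul]
  rw [hmeas, hsum, pos_card r s hr hrs]
  rw [← ENNReal.ofReal_natCast, ← ENNReal.ofReal_mul (by positivity)]
  have h7 : (0:ℝ) ≤ 1 - mu := by linarith
  rw [ENNReal.toReal_ofReal (mul_nonneg (Nat.cast_nonneg _)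
    (mul_nonneg (pow_nonneg hmu0.le _) (pow_nonneg h7 _)))]
  ring

open MeasureTheory in
/-- Lemma 4.3 of the paper: the sum of `r` i.i.d. `Geom(1−μ)` variables hits `s` with
probability at least `c/√n`, uniformly in the stated windows for `r` and `s`. -/
theorem geometric_sum_local_lower (lam mu : ℝ) (hlam : 1 < lam)
    (hmu : mu ∈ Set.Ioo (0 : ℝ) 1)
    (hconj : mu * Real.exp (-mu) = lam * Real.exp (-lam)) (M : ℝ) (hM : 0 < M) :
    ∃ c : ℝ, 0 < c ∧ ∃ N : ℕ, ∀ n : ℕ, N ≤ n → ∀ r s : ℕ, 0 < r → 0 < s →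
      |(r : ℝ) - n / 2 * (lam - mu) * (1 - mu / lam) * (1 - mu)| ≤ M * Real.sqrt n →
      |(s : ℝ) - n / 2 * (lam - mu) * (1 - mu / lam)| ≤ M * Real.sqrt n →
      ∀ X : PMF ℕ,
        (∀ k : ℕ, X k = ENNReal.ofReal (if 1 ≤ k then mu ^ (k - 1) * (1 - mu) else 0)) →
        c / Real.sqrt n ≤
          ((Measure.pi fun _ : Fin r => X.toMeasure)
            {f : Fin r → ℕ | ∑ i, f i = s}).toReal := by
  obtain ⟨hmu0, hmu1⟩ := hmu
  have hm1 : (0:ℝ) < 1 - mu := by linarith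
  set a : ℝ := (lam - mu) * (1 - mu/lam) / 2 with ha_def
  have hlam0 : (0:ℝ) < lam := by linarith
  have ha : 0 < a := by
    have h1 : 0 < lam - mu := by linarith
    have h2 : mu / lam < 1 := by
      rw [div_lt_one hlam0]; linarith
    have h3 : 0 < 1 - mu/lam := by linarith
    positivity
  set kap : ℝ := 18*M^2/(a*mu*(1-mu)) with hkap_def
  set c : ℝ := Real.sqrt Real.pi / 4 * (1-mu) * Real.exp (-kap) / Real.sqrt (2*(a+M))
    with hc_def
  have hc : 0 < c := by
    have := Real.sqrt_pos.mpr Real.pi_pos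
    positivity
  set K : ℝ := 1 + 1/M + (2*M+2)/a + (M+2)/((1-mu)*a) + (2*M+1)/(mu*a) with hK_def
  have hK0 : 0 < K := by positivity
  refine ⟨c, hc, ⌈K^2⌉₊, fun n hn r s hr0 hs0 hrwin hswin X hX => ?_⟩
  set t : ℝ := Real.sqrt n with ht_def
  have htK : K ≤ t := by
    have h1 : (K^2 : ℝ) ≤ n := le_trans (Nat.le_ceil _) (by exact_mod_cast hn)
    have h2 : Real.sqrt (K^2) ≤ t := Real.sqrt_le_sqrt h1
    rwa [Real.sqrt_sq hK0.le] at h2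
  -- components of K
  have ht1 : 1 ≤ t := by
    have h1 : 1/M > 0 := by positivity
    have h2 : (2*M+2)/a > 0 := by positivity
    have h3 : (M+2)/((1-mu)*a) > 0 := by positivity
    have h4 : (2*M+1)/(mu*a) > 0 := by positivity
    rw [hK_def] at htK; linarith
  have ht0 : 0 < t := by linarith
  have htsq : t^2 = n := Real.sq_sqrt (Nat.cast_nonneg n)
  have htn : t ≤ (n:ℝ) := by nlinarith
  have hMt : 1 ≤ M*t := by
    have h1 : 1/M ≤ t := by
      rw [hK_def] at htK
      have h2 : (2*M+2)/a > 0 := by positivity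
      have h3 : (M+2)/((1-mu)*a) > 0 := by positivity
      have h4 : (2*M+1)/(mu*a) > 0 := by positivity
      linarith
    rw [div_le_iff₀ hM] at h1
    linarith [mul_comm t M]
  have hat : 2*M+2 ≤ a*t := by
    have h1 : (2*M+2)/a ≤ t := by
      rw [hK_def] at htK
      have h2 : 1/M > 0 := by positivity
      have h3 : (M+2)/((1-mu)*a) > 0 := by positivity
      have h4 : (2*M+1)/(mu*a) > 0 := by positivity
      linarith
    rw [div_le_iff₀ ha] at h1
    linarith [mul_comm t a]
  have hmat : M+2 ≤ (1-mu)*a*t := by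
    have h1 : (M+2)/((1-mu)*a) ≤ t := by
      rw [hK_def] at htK
      have h2 : 1/M > 0 := by positivity
      have h3 : (2*M+2)/a > 0 := by positivity
      have h4 : (2*M+1)/(mu*a) > 0 := by positivity
      linarith
    rw [div_le_iff₀ (by positivity)] at h1
    linarith [mul_comm t ((1-mu)*a)]
  have hmuat : 2*M+1 ≤ mu*a*t := by
    have h1 : (2*M+1)/(mu*a) ≤ t := by
      rw [hK_def] at htK
      have h2 : 1/M > 0 := by positivity
      have h3 : (2*M+2)/a > 0 := by positivity
      have h4 : (M+2)/((1-mu)*a) > 0 := by positivity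
      linarith
    rw [div_le_iff₀ (by positivity)] at h1
    linarith [mul_comm t (mu*a)]
  -- window bounds in terms of a
  have hcen_s : (n:ℝ) / 2 * (lam - mu) * (1 - mu / lam) = a * n := by
    rw [ha_def]; ring
  have hcen_r : (n:ℝ) / 2 * (lam - mu) * (1 - mu / lam) * (1 - mu) = (1-mu) * (a * n) := by
    rw [ha_def]; ring
  rw [hcen_s] at hswin
  rw [hcen_r] at hrwin
  rw [abs_le] at hswin hrwin
  have hs1 : a*n - M*t ≤ (s:ℝ) := by linarith [hswin.1]
  have hs2 : (s:ℝ) ≤ a*n + M*t := by linarith [hswin.2]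
  have hr1 : (1-mu)*(a*n) - M*t ≤ (r:ℝ) := by linarith [hrwin.1]
  have hr2 : (r:ℝ) ≤ (1-mu)*(a*n) + M*t := by linarith [hrwin.2]
  have hnt : (n:ℝ) = t^2 := htsq.symm
  rw [hnt] at hs1 hs2 hr1 hr2
  -- auxiliary consequences
  have e1 : (M+2)*t ≤ (1-mu)*(a*t^2) := by linarith [mul_le_mul_of_nonneg_right hmat ht0.le]
  have e2 : (2*M+1)*t ≤ mu*(a*t^2) := by linarith [mul_le_mul_of_nonneg_right hmuat ht0.le]
  have e3 : (1-mu)*(a*t^2) = a*t^2 - mu*(a*t^2) := by ring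
  have e4 : (2*M+2)*t ≤ a*t^2 := by linarith [mul_le_mul_of_nonneg_right hat ht0.le]
  have e5 : M*t ≤ M*t^2 := by
    linarith [mul_le_mul_of_nonneg_left ht1 (mul_nonneg hM.le ht0.le)]
  -- natural number structure
  have h2r : 2 ≤ r := by
    have : (2:ℝ) ≤ (r:ℝ) := by linarith
    exact_mod_cast this
  have hrs1 : r + 1 ≤ s := by
    have : (r:ℝ) + 1 ≤ (s:ℝ) := by linarith
    exact_mod_cast this
  set B : ℕ := r - 1 with hB_def
  set C : ℕ := s - r with hC_def
  have hB1 : 1 ≤ B := by omega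
  have hC1 : 1 ≤ C := by omega
  have hrB : (B:ℝ) = (r:ℝ) - 1 := by
    rw [hB_def]; push_cast [Nat.cast_sub (by omega : 1 ≤ r)]; ring
  have hrC : (C:ℝ) = (s:ℝ) - (r:ℝ) := by
    rw [hC_def]; push_cast [Nat.cast_sub (by omega : r ≤ s)]; ring
  have hBC : (B:ℝ) + (C:ℝ) = (s:ℝ) - 1 := by rw [hrB, hrC]; ring
  -- range bounds for A := B + C
  have hA_lo : (a/2)*t^2 ≤ (B:ℝ)+(C:ℝ) := by
    rw [hBC]; linarith
  have hA_hi : (B:ℝ)+(C:ℝ) ≤ (a+M)*t^2 := by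
    rw [hBC]; linarith
  have hA_pos : (0:ℝ) < (B:ℝ)+(C:ℝ) := by
    have h6 : (0:ℝ) < (a/2)*t^2 := by positivity
    linarith
  -- deviation bound
  set uu : ℝ := (B:ℝ) - (1-mu)*((B:ℝ)+(C:ℝ)) with huu_def
  have huu : uu^2 ≤ 9*M^2*t^2 := by
    have hub : uu ≤ 3*(M*t) := by
      rw [huu_def, hBC, hrB]
      linarith [mul_le_mul_of_nonneg_left hs1 hm1.le,
        mul_nonneg hmu0.le (mul_nonneg hM.le ht0.le)]
    have hlb : -(3*(M*t)) ≤ uu := by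
      rw [huu_def, hBC, hrB]
      linarith [mul_le_mul_of_nonneg_left hs2 hm1.le,
        mul_nonneg hmu0.le (mul_nonneg hM.le ht0.le)]
    linarith [sq_le_sq' hlb hub]
  -- kl ≤ kap
  have hkl : uu^2/(((B:ℝ)+(C:ℝ))*mu*(1-mu)) ≤ kap := by
    rw [hkap_def]
    have h1 : uu^2/(((B:ℝ)+(C:ℝ))*mu*(1-mu)) ≤ (9*M^2*t^2)/(((a/2)*t^2)*mu*(1-mu)) := by
      apply div_le_div₀ (by positivity) huu (by positivity)
      linarith [mul_le_mul_of_nonneg_right hA_lo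
        (mul_nonneg hmu0.le hm1.le)]
    refine h1.trans (le_of_eq ?_)
    have ht0' : t ≠ 0 := ht0.ne'
    field_simp
    ring
  have hexp : Real.exp (-kap) ≤ Real.exp (-(uu^2/(((B:ℝ)+(C:ℝ))*mu*(1-mu)))) := by
    apply Real.exp_le_exp.mpr
    linarith
  -- sqrt bound
  have hsq : Real.sqrt (2*((B:ℝ)+(C:ℝ))) ≤ Real.sqrt (2*(a+M)) * t := by
    have h1 : Real.sqrt (2*((B:ℝ)+(C:ℝ))) ≤ Real.sqrt (2*(a+M)*t^2) := by
      apply Real.sqrt_le_sqrt; linarith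
    rwa [Real.sqrt_mul (by positivity) (t^2), Real.sqrt_sq ht0.le] at h1
  -- main bound
  have hmain := q_lower mu hmu0 hmu1 B C hB1 hC1
  -- rewrite the measure
  rw [measure_value mu hmu0 hmu1 r s (by omega) (by omega) X hX]
  have hids : (s-1).choose (r-1) = (B+C).choose B := by
    congr 1; omega
  have hid2 : s - r = C := rfl
  have hid3 : r = B + 1 := by omega
  rw [hids, hid2, hid3]
  -- final chain
  calc c / t = (Real.sqrt Real.pi / 4 * (1-mu) * Real.exp (-kap)) / (Real.sqrt (2*(a+M)) * t) := by
        rw [hc_def, div_div]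
    _ ≤ (Real.sqrt Real.pi / 4 * (1-mu) *
          Real.exp (-(uu^2/(((B:ℝ)+(C:ℝ))*mu*(1-mu))))) / Real.sqrt (2*((B:ℝ)+(C:ℝ))) := by
        apply div_le_div₀ _ _ (by positivity) hsq
        · positivity
        · have h1 : (0:ℝ) ≤ Real.sqrt Real.pi / 4 * (1-mu) := by positivity
          exact mul_le_mul_of_nonneg_left hexp h1
    _ ≤ ((B+C).choose B : ℝ) * mu^C * (1-mu)^(B+1) := by
        rw [huu_def] at *
        exact hmain
end
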